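/- arXiv:1706.08182 — 4 statements merged into one kernel-verified Lean document; each statement's English description precedes it below -/
import Mathlib

section
/- Let x̂ be a square-integrable random vector in R^n, C ∈ R^{m×n}, and M ∈ R^{m×m} symmetric positive semidefinite. Suppose Z ∈ R^{n×n} is symmetric positive semidefinite such that for every estimator x̂^e ∈ R^n (constant vector), E[(x̂ − x̂^e)(x̂ − x̂^e)^T] ⪰ Z in the Loewner order. Then inf over constant vectors y ∈ R^m of E[(y − C x̂)^T M (y − C x̂)] ≥ tr(C^T M C Z). -/
open MeasureTheory Matrix

private lemma auxTraceNonneg {k : ℕ} {A : Matrix (Fin k) (Fin k) ℝ}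
    (hA : A.PosSemidef) : 0 ≤ A.trace := by
  rw [Matrix.trace]
  refine Finset.sum_nonneg fun i _ => ?_
  have h := hA.dotProduct_mulVec_nonneg (Pi.single i 1)
  simpa [dotProduct, Matrix.mulVec, Pi.single_apply, Matrix.diag] using h

private lemma auxTraceMulNonneg {k : ℕ} {A B : Matrix (Fin k) (Fin k) ℝ}
    (hA : A.PosSemidef) (hB : B.PosSemidef) : 0 ≤ (A * B).trace := by
  obtain ⟨R, hRR, hRh⟩ : ∃ R : Matrix (Fin k) (Fin k) ℝ, R * R = A ∧ Rᴴ = R := by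
    open scoped MatrixOrder in
    exact ⟨CFC.sqrt A, CFC.sqrt_mul_sqrt_self A hA.nonneg, (CFC.sqrt_nonneg A).posSemidef.1⟩
  have hpsd : (R * B * R).PosSemidef := by
    have h := hB.mul_mul_conjTranspose_same R
    rwa [hRh] at h
  have : (A * B).trace = (R * B * R).trace := by
    rw [← hRR, mul_assoc, Matrix.trace_mul_comm]
  rw [this]
  exact auxTraceNonneg hpsd

/-- core inequality of Theorem 3 of the paper. If every constant estimator
`x̂ᵉ` of the square-integrable random vector `x̂` has error matrix `E[(x̂−x̂ᵉ)(x̂−x̂ᵉ)ᵀ] ⪰ Z`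
in the Loewner order, then for every constant `y ∈ ℝ^m`,
`E[(y − C x̂)ᵀ M (y − C x̂)] ≥ tr (Cᵀ M C Z)`; hence the infimum over `y` is `≥ tr (Cᵀ M C Z)`. -/
theorem stmt4
    {Ω : Type*} [MeasurableSpace Ω] (μ : Measure Ω) [IsProbabilityMeasure μ]
    {n m : ℕ} (xhat : Ω → Fin n → ℝ)
    (hx : ∀ i, MemLp (fun ω => xhat ω i) 2 μ)
    (C : Matrix (Fin m) (Fin n) ℝ)
    (M : Matrix (Fin m) (Fin m) ℝ) (hM : M.PosSemidef)
    (Z : Matrix (Fin n) (Fin n) ℝ) (hZ : Z.PosSemidef)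
    (hLB : ∀ xe : Fin n → ℝ,
      ((Matrix.of fun i j => ∫ ω, (xhat ω i - xe i) * (xhat ω j - xe j) ∂μ) - Z).PosSemidef) :
    (⨅ y : Fin m → ℝ,
        ∫ ω, (y - C.mulVec (xhat ω)) ⬝ᵥ M.mulVec (y - C.mulVec (xhat ω)) ∂μ) ≥
      (Cᵀ * M * C * Z).trace := by
  classical
  set e : Fin n → ℝ := fun i => ∫ ω, xhat ω i ∂μ with he
  set A : Matrix (Fin n) (Fin n) ℝ := Cᵀ * M * C with hAdef
  set S : Matrix (Fin n) (Fin n) ℝ :=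
    Matrix.of fun i j => ∫ ω, (xhat ω i - e i) * (xhat ω j - e j) ∂μ with hSdef
  -- integrability facts
  have hxi : ∀ i, Integrable (fun ω => xhat ω i) μ := fun i => (hx i).integrable one_le_two
  have hv2 : ∀ i, MemLp (fun ω => xhat ω i - e i) 2 μ :=
    fun i => (hx i).sub (memLp_const (e i))
  have hvi : ∀ i, Integrable (fun ω => xhat ω i - e i) μ :=
    fun i => (hv2 i).integrable one_le_two
  have hv0 : ∀ i, ∫ ω, (xhat ω i - e i) ∂μ = 0 := by
    intro i
    rw [integral_sub (hxi i) (integrable_const _), integral_const]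
    simp [he]
  have hvv : ∀ i j, Integrable (fun ω => (xhat ω i - e i) * (xhat ω j - e j)) μ := by
    intro i j
    have h := ((hv2 j).smul (hv2 i) (p := 2) (q := 2) (r := 1)).integrable le_rfl
    exact h.congr (ae_of_all _ fun ω => rfl)
  -- PSD facts
  have hApsd : A.PosSemidef := by
    have h := hM.conjTranspose_mul_mul_same C
    rwa [Matrix.conjTranspose_eq_transpose_of_trivial] at h
  have hSZ : (S - Z).PosSemidef := hLB e
  -- symmetry of S
  have hSsymm : ∀ p q, S q p = S p q := by
    intro p q
    simp only [hSdef, Matrix.of_apply]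
    simp_rw [mul_comm]
  -- trace identity
  have htr : (A * S).trace = ∑ p, ∑ q, A p q * S p q := by
    rw [Matrix.trace]
    simp only [Matrix.diag, Matrix.mul_apply]
    exact Finset.sum_congr rfl fun p _ => Finset.sum_congr rfl fun q _ => by rw [hSsymm]
  -- key integral computations
  have hlin : ∀ w : Fin n → ℝ,
      ∫ ω, (∑ q, w q * (xhat ω q - e q)) ∂μ = 0 := by
    intro w
    rw [integral_finset_sum _ (fun q _ => (hvi q).const_mul (w q))]
    simp [integral_const_mul, hv0]
  have hquad : ∫ ω, (∑ p, ∑ q, A p q * ((xhat ω p - e p) * (xhat ω q - e q))) ∂μ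
      = ∑ p, ∑ q, A p q * S p q := by
    rw [integral_finset_sum _ (fun p _ => integrable_finset_sum _
      (fun q _ => (hvv p q).const_mul (A p q)))]
    refine Finset.sum_congr rfl fun p _ => ?_
    rw [integral_finset_sum _ (fun q _ => (hvv p q).const_mul (A p q))]
    refine Finset.sum_congr rfl fun q _ => ?_
    rw [integral_const_mul]
    rfl
  rw [ge_iff_le]
  refine le_ciInf fun y => ?_
  set a : Fin m → ℝ := y - C.mulVec e with ha
  set w₁ : Fin n → ℝ := Matrix.vecMul a (M * C) with hw₁
  set w₂ : Fin n → ℝ := Matrix.vecMul (M.mulVec a) C with hw₂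
  -- pointwise expansion
  have hpt : ∀ ω, (y - C.mulVec (xhat ω)) ⬝ᵥ M.mulVec (y - C.mulVec (xhat ω))
      = a ⬝ᵥ M.mulVec a
        - (∑ q, w₁ q * (xhat ω q - e q))
        - (∑ q, w₂ q * (xhat ω q - e q))
        + ∑ p, ∑ q, A p q * ((xhat ω p - e p) * (xhat ω q - e q)) := by
    intro ω
    have hy : y - C.mulVec (xhat ω) = a - C.mulVec (fun k => xhat ω k - e k) := by
      have hfe : (fun k => xhat ω k - e k) = xhat ω - e := rfl
      rw [hfe, Matrix.mulVec_sub, ha]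
      abel
    rw [hy, sub_dotProduct, Matrix.mulVec_sub, dotProduct_sub,
      dotProduct_sub, Matrix.mulVec_mulVec,
      Matrix.dotProduct_mulVec a (M * C),
      dotProduct_comm (C.mulVec fun k => xhat ω k - e k) (M.mulVec a),
      Matrix.dotProduct_mulVec (M.mulVec a) C,
      Matrix.dotProduct_mulVec (C.mulVec fun k => xhat ω k - e k) (M * C),
      ← Matrix.vecMul_transpose C (fun k => xhat ω k - e k),
      Matrix.vecMul_vecMul]
    have h4 : (Matrix.vecMul (fun k => xhat ω k - e k) (Cᵀ * (M * C))) ⬝ᵥ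
        (fun k => xhat ω k - e k)
        = ∑ p, ∑ q, A p q * ((xhat ω p - e p) * (xhat ω q - e q)) := by
      simp only [dotProduct, Matrix.vecMul, hAdef, ← Matrix.mul_assoc,
        Finset.sum_mul]
      rw [Finset.sum_comm]
      exact Finset.sum_congr rfl fun p _ => Finset.sum_congr rfl fun q _ => by ring
    rw [h4]
    have e1 : (a ᵥ* (M * C)) ⬝ᵥ (fun k => xhat ω k - e k)
        = ∑ q, w₁ q * (xhat ω q - e q) := rfl
    have e2 : ((M *ᵥ a) ᵥ* C) ⬝ᵥ (fun k => xhat ω k - e k)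
        = ∑ q, w₂ q * (xhat ω q - e q) := rfl
    rw [e1, e2]
    ring
  have hG1 : Integrable (fun ω => ∑ q, w₁ q * (xhat ω q - e q)) μ :=
    integrable_finset_sum _ fun q _ => (hvi q).const_mul _
  have hG2 : Integrable (fun ω => ∑ q, w₂ q * (xhat ω q - e q)) μ :=
    integrable_finset_sum _ fun q _ => (hvi q).const_mul _
  have hQ : Integrable
      (fun ω => ∑ p, ∑ q, A p q * ((xhat ω p - e p) * (xhat ω q - e q))) μ :=
    integrable_finset_sum _ fun p _ => integrable_finset_sum _ fun q _ =>
      (hvv p q).const_mul _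
  have hsplit : ∫ ω, (y - C.mulVec (xhat ω)) ⬝ᵥ M.mulVec (y - C.mulVec (xhat ω)) ∂μ
      = a ⬝ᵥ M.mulVec a + ∑ p, ∑ q, A p q * S p q := by
    have hc : Integrable (fun _ : Ω => a ⬝ᵥ M.mulVec a) μ := integrable_const _
    have hI1 : Integrable
        (fun ω => a ⬝ᵥ M.mulVec a - ∑ q, w₁ q * (xhat ω q - e q)) μ := hc.sub hG1
    have hI12 : Integrable
        (fun ω => a ⬝ᵥ M.mulVec a - ∑ q, w₁ q * (xhat ω q - e q)
          - ∑ q, w₂ q * (xhat ω q - e q)) μ := hI1.sub hG2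
    rw [integral_congr_ae (ae_of_all _ hpt), integral_add hI12 hQ,
      integral_sub hI1 hG2, integral_sub hc hG1,
      integral_const, hlin w₁, hlin w₂, hquad]
    simp
  rw [hsplit]
  have h1 : 0 ≤ a ⬝ᵥ M.mulVec a := by
    have h := hM.dotProduct_mulVec_nonneg a
    simpa using h
  have h2 : (A * Z).trace ≤ ∑ p, ∑ q, A p q * S p q := by
    rw [← htr]
    have h := auxTraceMulNonneg hApsd hSZ
    rw [Matrix.mul_sub, Matrix.trace_sub] at h
    linarith
  calc (Cᵀ * M * C * Z).trace = (A * Z).trace := rfl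
    _ ≤ ∑ p, ∑ q, A p q * S p q := h2
    _ ≤ a ⬝ᵥ M.mulVec a + ∑ p, ∑ q, A p q * S p q := by linarith
end

section
/- Consider the closed-loop system x_{k+1} = A x_k + B u_k + w_k, y_k = C x_k + v_k with Kalman predictor x̂_{k+1|k} = A((I−KC) x̂_{k|k−1} + K y_k) + B u_k and any input sequence u_k. If an attacker adds input u_k^a and sensor bias s_k^a where x^a_{k+1} = A x^a_k + B u^a_k, x^a_0 = 0, s^a_k = −C x^a_k, and the plant evolves as x'_{k+1} = A x'_k + B(u_k + u^a_k) + w_k with x'_0 = x_0 and received outputs y'_k = C x'_k + v_k + s^a_k, then y'_k = y_k for all k (where y_k = C x_k + v_k is the unattacked output with x_{k+1} = A x_k + B u_k + w_k driven by the same noise realizations), and consequently the residue sequence z_k = y'_k − C x̂_{k|k−1} has the same distribution as under no attack. -/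
open Matrix

/-- undetectable attack. In the closed loop
`x_{k+1} = A x_k + B u_k + w_k`, `y_k = C x_k + v_k` with Kalman predictor
`x̂_{k+1|k} = A((I−KC) x̂_{k|k−1} + K y_k) + B u_k`, where the defender's input is a causal
function `F` of the received outputs, an attacker injecting `u^a_k` with sensor bias
`s^a_k = −C x^a_k`, `x^a_{k+1} = A x^a_k + B u^a_k`, `x^a_0 = 0`, leaves the received
outputs—and hence the residues—unchanged: `y'_k = y_k` and `z'_k = z_k` for all `k`. -/
theorem stmt9 {n m p : ℕ}
    (A : Matrix (Fin n) (Fin n) ℝ) (B : Matrix (Fin n) (Fin p) ℝ)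
    (C : Matrix (Fin m) (Fin n) ℝ) (K : Matrix (Fin n) (Fin m) ℝ)
    -- fixed noise realizations
    (w v : ℕ → Fin n → ℝ) (vm : ℕ → Fin m → ℝ)
    -- the defender's (causal) control policy, a function of received outputs
    (F : ℕ → (ℕ → Fin m → ℝ) → Fin p → ℝ)
    (hF : ∀ k (g h : ℕ → Fin m → ℝ), (∀ j, j ≤ k → g j = h j) → F k g = F k h)
    -- nominal (unattacked) trajectories
    (x : ℕ → Fin n → ℝ) (y : ℕ → Fin m → ℝ) (xh : ℕ → Fin n → ℝ) (z : ℕ → Fin m → ℝ)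
    (hy : ∀ k, y k = C.mulVec (x k) + vm k)
    (hx : ∀ k, x (k + 1) = A.mulVec (x k) + B.mulVec (F k y) + w k)
    (hxh : ∀ k, xh (k + 1) =
      A.mulVec ((1 - K * C).mulVec (xh k) + K.mulVec (y k)) + B.mulVec (F k y))
    (hz : ∀ k, z k = y k - C.mulVec (xh k))
    -- attacker's input and attack state
    (ua : ℕ → Fin p → ℝ) (xa : ℕ → Fin n → ℝ)
    (hxa0 : xa 0 = 0) (hxa : ∀ k, xa (k + 1) = A.mulVec (xa k) + B.mulVec (ua k))
    -- attacked trajectories: plant driven by `u_k + u^a_k`, outputs biased by `s^a_k = −C x^a_k`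
    (x' : ℕ → Fin n → ℝ) (y' : ℕ → Fin m → ℝ) (xh' : ℕ → Fin n → ℝ) (z' : ℕ → Fin m → ℝ)
    (hx'0 : x' 0 = x 0) (hxh'0 : xh' 0 = xh 0)
    (hy' : ∀ k, y' k = C.mulVec (x' k) + vm k + (- C.mulVec (xa k)))
    (hx' : ∀ k, x' (k + 1) = A.mulVec (x' k) + B.mulVec (F k y' + ua k) + w k)
    (hxh' : ∀ k, xh' (k + 1) =
      A.mulVec ((1 - K * C).mulVec (xh' k) + K.mulVec (y' k)) + B.mulVec (F k y'))
    (hz' : ∀ k, z' k = y' k - C.mulVec (xh' k)) :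
    ∀ k, y' k = y k ∧ z' k = z k := by
  -- x' k = x k + xa k by strong induction
  have hxx : ∀ k, x' k = x k + xa k := by
    intro k
    induction k using Nat.strong_induction_on with
    | _ k ih =>
      match k with
      | 0 => simp [hx'0, hxa0]
      | Nat.succ k =>
        have hyj : ∀ j, j ≤ k → y' j = y j := by
          intro j hj
          rw [hy' j, hy j, ih j (Nat.lt_succ_of_le hj)]
          simp [Matrix.mulVec_add]
          abel
        have hFk : F k y' = F k y := hF k y' y hyj
        rw [hx' k, hx k, hxa k, ih k (Nat.lt_succ_self k), hFk]
        simp [Matrix.mulVec_add]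
        abel
  have hyy : ∀ k, y' k = y k := by
    intro k
    rw [hy' k, hy k, hxx k]
    simp [Matrix.mulVec_add]
    abel
  have hFe : ∀ k, F k y' = F k y := fun k => hF k y' y (fun j _ => hyy j)
  have hxhh : ∀ k, xh' k = xh k := by
    intro k
    induction k with
    | zero => exact hxh'0
    | succ k ih => rw [hxh' k, hxh k, ih, hyy k, hFe k]
  intro k
  exact ⟨hyy k, by rw [hz' k, hz k, hyy k, hxhh k]⟩
end

section
/- In the undetectable attack of the previous setting (x^a_{k+1} = A x^a_k + B u^a_k, x^a_0 = 0), the attacked plant state satisfies x'_k = x_k + x^a_k for all k, where x_k is the nominal state driven by the same noise and inputs u_k. Hence if A has an eigenvalue with modulus greater than 1 and the attacker chooses u^a_k to excite the corresponding unstable mode (i.e., x^a_k is unbounded), the state deviation x'_k − x_k grows unboundedly while the outputs received by the operator are unchanged. -/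
open Matrix

/-- In the undetectable attack (`x^a_{k+1} = A x^a_k + B u^a_k`, `x^a_0 = 0`),
the attacked plant state satisfies `x'_k = x_k + x^a_k` for all `k`, so if the attacker excites
an unstable mode (i.e. `x^a_k` is unbounded) the deviation `x'_k − x_k` grows unboundedly while
the outputs received by the operator are unchanged (`y'_k = y_k`). -/
theorem stmt10 {n m p : ℕ}
    (A : Matrix (Fin n) (Fin n) ℝ) (B : Matrix (Fin n) (Fin p) ℝ)
    (C : Matrix (Fin m) (Fin n) ℝ)
    (w : ℕ → Fin n → ℝ) (vm : ℕ → Fin m → ℝ) (u : ℕ → Fin p → ℝ)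
    -- nominal state and output
    (x : ℕ → Fin n → ℝ) (y : ℕ → Fin m → ℝ)
    (hx : ∀ k, x (k + 1) = A.mulVec (x k) + B.mulVec (u k) + w k)
    (hy : ∀ k, y k = C.mulVec (x k) + vm k)
    -- attack state driven by the attacker's input
    (ua : ℕ → Fin p → ℝ) (xa : ℕ → Fin n → ℝ)
    (hxa0 : xa 0 = 0) (hxa : ∀ k, xa (k + 1) = A.mulVec (xa k) + B.mulVec (ua k))
    -- attacked state and received outputs (bias `s^a_k = −C x^a_k`)
    (x' : ℕ → Fin n → ℝ) (y' : ℕ → Fin m → ℝ)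
    (hx'0 : x' 0 = x 0)
    (hx' : ∀ k, x' (k + 1) = A.mulVec (x' k) + B.mulVec (u k + ua k) + w k)
    (hy' : ∀ k, y' k = C.mulVec (x' k) + vm k + (- C.mulVec (xa k))) :
    (∀ k, x' k = x k + xa k) ∧ (∀ k, y' k = y k) ∧
      ((¬ ∃ R : ℝ, ∀ k, ‖xa k‖ ≤ R) → ¬ ∃ R : ℝ, ∀ k, ‖x' k - x k‖ ≤ R) := by
  have key : ∀ k, x' k = x k + xa k := by
    intro k
    induction k with
    | zero => simp [hx'0, hxa0]
    | succ k ih =>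
      rw [hx', hx, hxa, ih, Matrix.mulVec_add, Matrix.mulVec_add]
      abel
  refine ⟨key, fun k => ?_, fun h ⟨R, hR⟩ => h ⟨R, fun k => ?_⟩⟩
  · rw [hy', hy, key, Matrix.mulVec_add]; abel
  · have := hR k
    rwa [key, add_sub_cancel_left] at this
end

section
/- Let Σ ⪰ 0 be positive semidefinite in R^{m×m}, G a sub-sigma-algebra, y a G-measurable random vector and x̂ a square-integrable random vector in R^n, C_k a G-measurable random m×n matrix with bounded entries. Then s* = E[C_k x̂ | G] − y satisfies: for all G-measurable square-integrable s, E[(y + s* − C_k x̂)^T Σ (y + s* − C_k x̂)] ≤ E[(y + s − C_k x̂)^T Σ (y + s − C_k x̂)] provided Σ is positive definite; for merely positive semidefinite Σ, s* is a (possibly non-unique) minimizer. -/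
open MeasureTheory ProbabilityTheory Matrix

open scoped MatrixOrder in
private lemma quad_sqrt {m : ℕ} (S : Matrix (Fin m) (Fin m) ℝ) (hS : S.PosSemidef) :
    ∃ A : Matrix (Fin m) (Fin m) ℝ,
    ∀ v : Fin m → ℝ, v ⬝ᵥ S.mulVec v = (A.mulVec v) ⬝ᵥ (A.mulVec v) := by
  refine ⟨CFC.sqrt S, fun v => ?_⟩
  have hAT : (CFC.sqrt S).transpose = CFC.sqrt S := by
    have := (Matrix.nonneg_iff_posSemidef.mp (CFC.sqrt_nonneg S)).isHermitian
    simpa [Matrix.IsHermitian, Matrix.conjTranspose_eq_transpose_of_trivial] using this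
  conv_lhs => rw [← CFC.sqrt_mul_sqrt_self S hS.nonneg, ← mulVec_mulVec, dotProduct_mulVec, ← mulVec_transpose, hAT]

private lemma sub_dot_le {m : ℕ} (a b : Fin m → ℝ) :
    (a - b) ⬝ᵥ (a - b) ≤ 2*(a ⬝ᵥ a) + 2*(b ⬝ᵥ b) := by
  simp only [dotProduct, Pi.sub_apply]
  rw [Finset.mul_sum, Finset.mul_sum, ← Finset.sum_add_distrib]
  exact Finset.sum_le_sum fun i _ => by nlinarith [sq_nonneg (a i + b i)]

private lemma dot_self_nonneg {m : ℕ} (a : Fin m → ℝ) : (0:ℝ) ≤ a ⬝ᵥ a :=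
  Finset.sum_nonneg fun _ _ => mul_self_nonneg _

private lemma sq_le_dot_self {m : ℕ} (a : Fin m → ℝ) (i : Fin m) : a i * a i ≤ a ⬝ᵥ a :=
  Finset.single_le_sum (f := fun j => a j * a j) (fun _ _ => mul_self_nonneg _)
    (Finset.mem_univ i)

/-- Theorem 2 of the paper, with random output matrix `C_k`. With `G` the
attacker's information σ-algebra, `y` `G`-measurable, `x̂` square-integrable and `C_k` a bounded
`G`-measurable random matrix, the forged bias `s* = E[C_k x̂ | G] − y` minimizes the expected
quadratic residue statistic over all `G`-measurable square-integrable forgeries `s`: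
`E[(y + s* − C_k x̂)ᵀ Σ (y + s* − C_k x̂)] ≤ E[(y + s − C_k x̂)ᵀ Σ (y + s − C_k x̂)]`. -/
theorem stmt19
    {Ω : Type*} {mΩ : MeasurableSpace Ω} (μ : Measure Ω) [IsProbabilityMeasure μ]
    {n m : ℕ} (G : MeasurableSpace Ω) (hG : G ≤ mΩ)
    (S : Matrix (Fin m) (Fin m) ℝ) (hS : S.PosSemidef)
    (y : Ω → Fin m → ℝ) (hy : ∀ i, StronglyMeasurable[G] (fun ω => y ω i))
    (xhat : Ω → Fin n → ℝ) (hxhat : ∀ i, MemLp (fun ω => xhat ω i) 2 μ)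
    (Ck : Ω → Matrix (Fin m) (Fin n) ℝ)
    (hCkmeas : ∀ i j, StronglyMeasurable[G] (fun ω => Ck ω i j))
    (hCkbdd : ∃ R : ℝ, ∀ ω i j, |Ck ω i j| ≤ R)
    -- the optimal forged bias `s* = E[C_k x̂ | G] − y`
    (sstar : Ω → Fin m → ℝ)
    (hsstar : ∀ i, (fun ω => sstar ω i) =ᵐ[μ]
      fun ω => (μ[fun ω' => (Ck ω').mulVec (xhat ω') i | G]) ω - y ω i)
    (hintstar : Integrable (fun ω =>
      (y ω + sstar ω - (Ck ω).mulVec (xhat ω)) ⬝ᵥ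
        S.mulVec (y ω + sstar ω - (Ck ω).mulVec (xhat ω))) μ) :
    ∀ s : Ω → Fin m → ℝ, (∀ i, StronglyMeasurable[G] (fun ω => s ω i)) →
      (∀ i, MemLp (fun ω => s ω i) 2 μ) →
      Integrable (fun ω =>
        (y ω + s ω - (Ck ω).mulVec (xhat ω)) ⬝ᵥ
          S.mulVec (y ω + s ω - (Ck ω).mulVec (xhat ω))) μ →
      (∫ ω, (y ω + sstar ω - (Ck ω).mulVec (xhat ω)) ⬝ᵥ
          S.mulVec (y ω + sstar ω - (Ck ω).mulVec (xhat ω)) ∂μ) ≤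
        ∫ ω, (y ω + s ω - (Ck ω).mulVec (xhat ω)) ⬝ᵥ
          S.mulVec (y ω + s ω - (Ck ω).mulVec (xhat ω)) ∂μ := by
  classical
  obtain ⟨R₀, hR₀⟩ := hCkbdd
  intro s hsMeas hsL2 hsInt
  set z : Ω → Fin m → ℝ := fun ω => (Ck ω).mulVec (xhat ω) with hzdef
  have hzsum : ∀ i, (fun ω => z ω i) = fun ω => ∑ j, Ck ω i j * xhat ω j := by
    intro i; funext ω; simp [hzdef, Matrix.mulVec, dotProduct]
  have hzm : ∀ i, AEStronglyMeasurable[mΩ] (fun ω => z ω i) μ := by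
    intro i; rw [hzsum i]
    exact Finset.aestronglyMeasurable_fun_sum _ fun j _ =>
      ((hCkmeas i j).mono hG).aestronglyMeasurable.mul (hxhat j).aestronglyMeasurable
  have hzL2 : ∀ i, MemLp (fun ω => z ω i) 2 μ := by
    intro i; rw [hzsum i]
    refine memLp_finsetSum _ fun j _ => ?_
    refine MemLp.of_le ((hxhat j).const_mul |R₀|)
      (((hCkmeas i j).mono hG).aestronglyMeasurable.mul (hxhat j).aestronglyMeasurable) ?_
    refine Filter.Eventually.of_forall fun ω => ?_
    simp only [norm_mul, Real.norm_eq_abs, abs_abs]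
    exact mul_le_mul_of_nonneg_right ((hR₀ ω i j).trans (le_abs_self _)) (abs_nonneg _)
  have hzInt : ∀ i, Integrable (fun ω => z ω i) μ := fun i => (hzL2 i).integrable one_le_two
  obtain ⟨A, hquad⟩ := quad_sqrt S hS
  -- conditional expectations of the components of z
  set c : Fin m → Ω → ℝ := fun i => μ[fun ω => z ω i | G] with hcdef
  have hc : ∀ i, μ[fun ω => z ω i | G] = c i := fun _ => rfl
  -- the decomposition e = D + E
  set Dv : Ω → Fin m → ℝ := fun ω i => y ω i + s ω i - c i ω with hDdef
  set Ev : Ω → Fin m → ℝ := fun ω i => c i ω - z ω i with hEdef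
  have hdec : ∀ ω, y ω + s ω - z ω = Dv ω + Ev ω := by
    intro ω; funext i
    simp only [Pi.add_apply, Pi.sub_apply, hDdef, hEdef]
    ring
  have hstarE : (fun ω => y ω + sstar ω - z ω) =ᵐ[μ] fun ω => Ev ω := by
    have h : ∀ᵐ ω ∂μ, ∀ i, sstar ω i = c i ω - y ω i := ae_all_iff.2 fun i => hsstar i
    filter_upwards [h] with ω hω
    funext i
    simp only [Pi.add_apply, Pi.sub_apply, hEdef, hω i]
    ring
  -- the three pieces
  set QD : Ω → ℝ := fun ω => (A.mulVec (Dv ω)) ⬝ᵥ (A.mulVec (Dv ω)) with hQDdef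
  set QE : Ω → ℝ := fun ω => (A.mulVec (Ev ω)) ⬝ᵥ (A.mulVec (Ev ω)) with hQEdef
  set X : Ω → ℝ := fun ω => (A.mulVec (Dv ω)) ⬝ᵥ (A.mulVec (Ev ω)) with hXdef
  have hQF : ∀ ω, (y ω + s ω - z ω) ⬝ᵥ S.mulVec (y ω + s ω - z ω)
      = QD ω + 2 * X ω + QE ω := by
    intro ω
    rw [hquad, hdec ω, Matrix.mulVec_add]
    simp only [add_dotProduct, dotProduct_add, hQDdef, hQEdef, hXdef]
    rw [dotProduct_comm (A.mulVec (Ev ω)) (A.mulVec (Dv ω))]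
    ring
  have hQstar : (fun ω => (y ω + sstar ω - z ω) ⬝ᵥ S.mulVec (y ω + sstar ω - z ω))
      =ᵐ[μ] QE := by
    filter_upwards [hstarE] with ω hω
    rw [hω, hquad]
  -- integrability
  have IQE : Integrable QE μ := hintstar.congr hQstar
  have IF : Integrable (fun ω => QD ω + 2 * X ω + QE ω) μ :=
    hsInt.congr (Filter.Eventually.of_forall fun ω => hQF ω)
  -- measurability of the components
  have hDmG : ∀ j, StronglyMeasurable[G] fun ω => Dv ω j := fun j =>
    ((hy j).add (hsMeas j)).sub stronglyMeasurable_condExp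
  have hADsum : ∀ i, (fun ω => A.mulVec (Dv ω) i) = fun ω => ∑ j, A i j * Dv ω j := by
    intro i; funext ω; simp [Matrix.mulVec, dotProduct]
  have hAEsum : ∀ i, (fun ω => A.mulVec (Ev ω) i) = fun ω => ∑ j, A i j * Ev ω j := by
    intro i; funext ω; simp [Matrix.mulVec, dotProduct]
  have hADmG : ∀ i, StronglyMeasurable[G] fun ω => A.mulVec (Dv ω) i := by
    intro i; rw [hADsum i]
    exact Finset.stronglyMeasurable_fun_sum _ fun j _ => (stronglyMeasurable_const).mul (hDmG j)
  have hADm : ∀ i, AEStronglyMeasurable[mΩ] (fun ω => A.mulVec (Dv ω) i) μ := fun i =>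
    ((hADmG i).mono hG).aestronglyMeasurable
  have hEvm : ∀ j, AEStronglyMeasurable[mΩ] (fun ω => Ev ω j) μ := fun j =>
    ((stronglyMeasurable_condExp.mono hG).aestronglyMeasurable).sub (hzm j)
  have hAEm : ∀ i, AEStronglyMeasurable[mΩ] (fun ω => A.mulVec (Ev ω) i) μ := by
    intro i; rw [hAEsum i]
    exact Finset.aestronglyMeasurable_fun_sum _ fun j _ => aestronglyMeasurable_const.mul (hEvm j)
  have hQDm : AEStronglyMeasurable[mΩ] QD μ := by
    have : QD = fun ω => ∑ i, A.mulVec (Dv ω) i * A.mulVec (Dv ω) i := by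
      funext ω; simp [hQDdef, dotProduct]
    rw [this]
    exact Finset.aestronglyMeasurable_fun_sum _ fun i _ => (hADm i).mul (hADm i)
  have hQEm : AEStronglyMeasurable[mΩ] QE μ := by
    have : QE = fun ω => ∑ i, A.mulVec (Ev ω) i * A.mulVec (Ev ω) i := by
      funext ω; simp [hQEdef, dotProduct]
    rw [this]
    exact Finset.aestronglyMeasurable_fun_sum _ fun i _ => (hAEm i).mul (hAEm i)
  -- QD is dominated by 2·(QD+2X+QE) + 2·QE
  have hQDle : ∀ ω, QD ω ≤ 2 * (QD ω + 2 * X ω + QE ω) + 2 * QE ω := by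
    intro ω
    have h1 : A.mulVec (Dv ω) = A.mulVec (Dv ω + Ev ω) - A.mulVec (Ev ω) := by
      rw [Matrix.mulVec_add]; abel
    have h2 := sub_dot_le (A.mulVec (Dv ω + Ev ω)) (A.mulVec (Ev ω))
    rw [← h1] at h2
    have h3 : (A.mulVec (Dv ω + Ev ω)) ⬝ᵥ (A.mulVec (Dv ω + Ev ω))
        = QD ω + 2 * X ω + QE ω := by
      rw [Matrix.mulVec_add]
      simp only [add_dotProduct, dotProduct_add, hQDdef, hQEdef, hXdef]
      rw [dotProduct_comm (A.mulVec (Ev ω)) (A.mulVec (Dv ω))]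
      ring
    rw [h3] at h2
    exact h2
  have IQD : Integrable QD μ := by
    refine Integrable.mono ((IF.const_mul 2).add (IQE.const_mul 2)) hQDm ?_
    refine Filter.Eventually.of_forall fun ω => ?_
    have h0 : (0:ℝ) ≤ QD ω := dot_self_nonneg _
    rw [Real.norm_eq_abs, Real.norm_eq_abs, abs_of_nonneg h0]
    exact (hQDle ω).trans (le_abs_self _)
  have IX : Integrable X μ := by
    have h : Integrable (fun ω => ((QD ω + 2 * X ω + QE ω) - QD ω - QE ω) / 2) μ :=
      ((IF.sub IQD).sub IQE).div_const 2
    exact h.congr (Filter.Eventually.of_forall fun ω => by ring)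
  -- componentwise square-integrability
  have hADL2 : ∀ i, MemLp (fun ω => A.mulVec (Dv ω) i) 2 μ := by
    intro i
    rw [memLp_two_iff_integrable_sq (hADm i)]
    have hsq : Integrable (fun ω => A.mulVec (Dv ω) i * A.mulVec (Dv ω) i) μ := by
      refine Integrable.mono IQD ((hADm i).mul (hADm i)) ?_
      refine Filter.Eventually.of_forall fun ω => ?_
      rw [Real.norm_eq_abs, Real.norm_eq_abs, abs_mul_self,
        abs_of_nonneg (dot_self_nonneg _)]
      exact sq_le_dot_self _ i
    exact hsq.congr (Filter.Eventually.of_forall fun ω => by simp [pow_two])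
  have hAEL2 : ∀ i, MemLp (fun ω => A.mulVec (Ev ω) i) 2 μ := by
    intro i
    rw [memLp_two_iff_integrable_sq (hAEm i)]
    have hsq : Integrable (fun ω => A.mulVec (Ev ω) i * A.mulVec (Ev ω) i) μ := by
      refine Integrable.mono IQE ((hAEm i).mul (hAEm i)) ?_
      refine Filter.Eventually.of_forall fun ω => ?_
      rw [Real.norm_eq_abs, Real.norm_eq_abs, abs_mul_self,
        abs_of_nonneg (dot_self_nonneg _)]
      exact sq_le_dot_self _ i
    exact hsq.congr (Filter.Eventually.of_forall fun ω => by simp [pow_two])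
  -- the conditional expectation of each (A Ev)_i vanishes
  have hEvInt : ∀ j, Integrable (fun ω => Ev ω j) μ := fun j =>
    integrable_condExp.sub (hzInt j)
  have hEvzero : ∀ j, μ[fun ω => Ev ω j | G] =ᵐ[μ] 0 := by
    intro j
    have h1 : μ[fun ω => Ev ω j | G] =ᵐ[μ] μ[c j | G] - μ[fun ω => z ω j | G] :=
      condExp_sub integrable_condExp (hzInt j) G
    have h2 : μ[c j | G] =ᵐ[μ] μ[fun ω => z ω j | G] := by
      rw [hcdef]
      exact condExp_condExp_of_le le_rfl hG
    filter_upwards [h1, h2] with ω hω1 hω2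
    simp only [Pi.zero_apply]
    rw [hω1]
    simp [Pi.sub_apply, hω2]
  have hAEzero : ∀ i, μ[fun ω => A.mulVec (Ev ω) i | G] =ᵐ[μ] 0 := by
    intro i
    rw [hAEsum i]
    have heq : (fun ω => ∑ j, A i j * Ev ω j)
        = ∑ j : Fin m, (fun ω => A i j * Ev ω j) := by
      funext ω; simp
    have h1 : μ[fun ω => ∑ j, A i j * Ev ω j | G]
        =ᵐ[μ] ∑ j, μ[fun ω => A i j * Ev ω j | G] := by
      rw [heq]
      exact condExp_finsetSum (fun j _ => (hEvInt j).const_mul _) G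
    have h2 : ∀ j : Fin m, μ[fun ω => A i j * Ev ω j | G] =ᵐ[μ] 0 := by
      intro j
      have hs : μ[(A i j) • (fun ω => Ev ω j) | G] =ᵐ[μ] (A i j) • μ[fun ω => Ev ω j | G] :=
        condExp_smul (A i j) (fun ω => Ev ω j) G
      have : (fun ω => A i j * Ev ω j) = (A i j) • (fun ω => Ev ω j) := by
        funext ω; simp [mul_comm]
      rw [this]
      filter_upwards [hs, hEvzero j] with ω hω1 hω2
      simp only [Pi.zero_apply]
      rw [hω1]
      simp [hω2]
    have h3 : (∑ j, μ[fun ω => A i j * Ev ω j | G]) =ᵐ[μ] 0 := by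
      have := eventuallyEq_sum (l := ae μ) (s := Finset.univ)
        (f := fun j => μ[fun ω => A i j * Ev ω j | G]) (g := fun _ => (0 : Ω → ℝ))
        (fun j _ => h2 j)
      simpa using this
    exact h1.trans h3
  -- the cross term vanishes
  have hXint_i : ∀ i, Integrable (fun ω => A.mulVec (Dv ω) i * A.mulVec (Ev ω) i) μ := by
    intro i
    have := ((hAEL2 i).smul (hADL2 i) (p := 2) (q := 2) (r := 1)).integrable le_rfl
    exact this.congr (Filter.Eventually.of_forall fun ω => by simp [smul_eq_mul])
  have hXzero_i : ∀ i, ∫ ω, A.mulVec (Dv ω) i * A.mulVec (Ev ω) i ∂μ = 0 := by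
    intro i
    have hfg : Integrable
        ((fun ω => A.mulVec (Dv ω) i) * (fun ω => A.mulVec (Ev ω) i)) μ :=
      (hXint_i i).congr (Filter.Eventually.of_forall fun ω => rfl)
    have hpull := condExp_mul_of_stronglyMeasurable_left (hADmG i) hfg
      ((hAEL2 i).integrable one_le_two)
    have hzero : ((fun ω => A.mulVec (Dv ω) i) * μ[fun ω => A.mulVec (Ev ω) i | G])
        =ᵐ[μ] 0 := by
      filter_upwards [hAEzero i] with ω hω
      simp only [Pi.mul_apply, Pi.zero_apply]
      rw [hω]
      simp
    calc ∫ ω, A.mulVec (Dv ω) i * A.mulVec (Ev ω) i ∂μ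
        = ∫ ω, ((fun ω => A.mulVec (Dv ω) i) * (fun ω => A.mulVec (Ev ω) i)) ω ∂μ := rfl
      _ = ∫ ω, (μ[(fun ω => A.mulVec (Dv ω) i) * (fun ω => A.mulVec (Ev ω) i) | G]) ω ∂μ :=
          (integral_condExp hG).symm
      _ = 0 := integral_eq_zero_of_ae (hpull.trans hzero)
  have hXzero : ∫ ω, X ω ∂μ = 0 := by
    have hXsum : X = fun ω => ∑ i, A.mulVec (Dv ω) i * A.mulVec (Ev ω) i := by
      funext ω; simp [hXdef, dotProduct]
    rw [hXsum, integral_finset_sum _ fun i _ => hXint_i i]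
    simp [hXzero_i]
  -- put everything together
  have hleft : (∫ ω, (y ω + sstar ω - z ω) ⬝ᵥ S.mulVec (y ω + sstar ω - z ω) ∂μ)
      = ∫ ω, QE ω ∂μ := integral_congr_ae hQstar
  have IDX : Integrable (fun ω => QD ω + 2 * X ω) μ := IQD.add (IX.const_mul 2)
  have hright : (∫ ω, (y ω + s ω - z ω) ⬝ᵥ S.mulVec (y ω + s ω - z ω) ∂μ)
      = ∫ ω, QD ω ∂μ + 2 * ∫ ω, X ω ∂μ + ∫ ω, QE ω ∂μ := by
    rw [integral_congr_ae (Filter.Eventually.of_forall fun ω => hQF ω)]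
    rw [integral_add IDX IQE, integral_add IQD (IX.const_mul 2), integral_const_mul]
  have hQDnn : (0:ℝ) ≤ ∫ ω, QD ω ∂μ :=
    integral_nonneg fun ω => dot_self_nonneg _
  show (∫ ω, (y ω + sstar ω - z ω) ⬝ᵥ S.mulVec (y ω + sstar ω - z ω) ∂μ)
      ≤ ∫ ω, (y ω + s ω - z ω) ⬝ᵥ S.mulVec (y ω + s ω - z ω) ∂μ
  rw [hleft, hright, hXzero]
  linarith
end
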